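/- Let n ≥ 1 and let ϑ : ℝ → ℝⁿ be a differentiable solution of the all-to-all Kuramoto model ϑ̇_k(t) = (1/n) Σ_{i=1}^n sin(ϑ_i(t) − ϑ_k(t)) for k = 1,…,n. Define the complex order parameter r(t) := (1/n) Σ_{k=1}^n e^{i ϑ_k(t)} ∈ ℂ. Then for all t, d/dt |r(t)|² = (2/n) Σ_{k=1}^n ( Im( e^{−i ϑ_k(t)} r(t) ) )². In particular |r(t)| is nondecreasing; writing r = ρ e^{iφ} with ρ = |r|, this is the identity ρ̇ = (ρ/n) Σ_{k=1}^n sin(ϑ_k − φ)². -/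

import Mathlib

open Complex Real

/-- The complex order parameter (centroid) of `n` phases:
`r(t) = (1/n) Σ_k e^{i ϑ_k(t)}`. -/
noncomputable def orderParam (n : ℕ) (ϑ : ℝ → Fin n → ℝ) (t : ℝ) : ℂ :=
  (1 / (n : ℂ)) * ∑ k, Complex.exp (Complex.I * (ϑ t k : ℂ))

/-- **Evolution of the Kuramoto order parameter.** Along any solution of the all-to-all
Kuramoto model `ϑ̇_k = (1/n) Σ_i sin(ϑ_i − ϑ_k)`, the squared modulus of the order
parameter `r(t) = (1/n) Σ_k e^{iϑ_k(t)}` satisfies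
`d/dt |r(t)|² = (2/n) Σ_k (Im(e^{−iϑ_k(t)} r(t)))²`; in particular `|r(t)|` is
nondecreasing (writing `r = ρe^{iφ}`, this is `ρ̇ = (ρ/n) Σ_k sin(ϑ_k − φ)²`). -/
theorem kuramoto_order_parameter_derivative {n : ℕ} (hn : 1 ≤ n)
    (ϑ : ℝ → Fin n → ℝ)
    (hϑ : ∀ t, HasDerivAt ϑ
      (fun k => (1 / (n : ℝ)) * ∑ i, Real.sin (ϑ t i - ϑ t k)) t) :
    (∀ t, HasDerivAt (fun s => ‖orderParam n ϑ s‖ ^ 2)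
      ((2 / (n : ℝ)) *
        ∑ k, (Complex.exp (-Complex.I * (ϑ t k : ℂ)) * orderParam n ϑ t).im ^ 2) t) ∧
    Monotone fun t => ‖orderParam n ϑ t‖ := by
  have hn0 : (n : ℝ) ≠ 0 := by positivity
  set d : ℝ → Fin n → ℝ := fun t k => (1 / (n : ℝ)) * ∑ i, Real.sin (ϑ t i - ϑ t k) with hd
  have hcomp : ∀ t k, HasDerivAt (fun s => ϑ s k) (d t k) t :=
    fun t k => (hasDerivAt_pi.mp (hϑ t)) k
  -- derivative of the order parameter
  have hr : ∀ t, HasDerivAt (orderParam n ϑ)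
      ((1 / (n : ℂ)) * ∑ k, Complex.I * (d t k : ℂ) * Complex.exp (Complex.I * (ϑ t k : ℂ))) t := by
    intro t
    unfold orderParam
    refine HasDerivAt.const_mul _ (HasDerivAt.fun_sum fun k _ => ?_)
    have h1 : HasDerivAt (fun s => ((ϑ s k : ℝ) : ℂ)) ((d t k : ℂ)) t :=
      (hcomp t k).ofReal_comp
    have h2 := (h1.const_mul Complex.I).cexp
    refine h2.congr_deriv ?_
    ring
  -- key identity : Im(e^{-iϑ_k} r) = d t k
  have key : ∀ t k, (Complex.exp (-Complex.I * (ϑ t k : ℂ)) * orderParam n ϑ t).im = d t k := by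
    intro t k
    unfold orderParam
    have h1 : Complex.exp (-Complex.I * (ϑ t k : ℂ)) *
        ((1 / (n : ℂ)) * ∑ j, Complex.exp (Complex.I * (ϑ t j : ℂ))) =
        ((1 / (n : ℝ) : ℝ) : ℂ) * ∑ j, Complex.exp (((ϑ t j - ϑ t k : ℝ) : ℂ) * Complex.I) := by
      simp only [Finset.mul_sum]
      refine Finset.sum_congr rfl fun j _ => ?_
      rw [mul_left_comm, ← Complex.exp_add]
      congr 1
      · push_cast; ring
      · push_cast; ring
    rw [h1]
    simp only [Complex.mul_im, Complex.ofReal_re, Complex.ofReal_im, Complex.im_sum,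
      Complex.re_sum, Complex.exp_ofReal_mul_I_im, zero_mul, mul_zero, add_zero, zero_add, hd]
  -- derivative of squared norm
  have main : ∀ t, HasDerivAt (fun s => ‖orderParam n ϑ s‖ ^ 2)
      ((2 / (n : ℝ)) *
        ∑ k, (Complex.exp (-Complex.I * (ϑ t k : ℂ)) * orderParam n ϑ t).im ^ 2) t := by
    intro t
    set r := orderParam n ϑ t with hrdef
    set r' := (1 / (n : ℂ)) * ∑ k, Complex.I * (d t k : ℂ) * Complex.exp (Complex.I * (ϑ t k : ℂ)) with hr'def
    have hre : HasDerivAt (fun s => (orderParam n ϑ s).re) r'.re t :=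
      (Complex.reCLM.hasFDerivAt.comp_hasDerivAt t (hr t))
    have him : HasDerivAt (fun s => (orderParam n ϑ s).im) r'.im t :=
      (Complex.imCLM.hasFDerivAt.comp_hasDerivAt t (hr t))
    have hsq : HasDerivAt (fun s => (orderParam n ϑ s).re ^ 2 + (orderParam n ϑ s).im ^ 2)
        (2 * r.re * r'.re + 2 * r.im * r'.im) t := by
      have := (hre.fun_pow 2).fun_add (him.fun_pow 2)
      refine this.congr_deriv ?_
      simp [hrdef]
    have heq : (fun s => ‖orderParam n ϑ s‖ ^ 2)
        = fun s => (orderParam n ϑ s).re ^ 2 + (orderParam n ϑ s).im ^ 2 := by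
      funext s
      rw [Complex.sq_norm, Complex.normSq_apply]
      ring
    rw [heq]
    convert hsq using 1
    -- compute the derivative value
    have him2 : ∀ k, (Complex.I * (d t k : ℂ) * Complex.exp (Complex.I * (ϑ t k : ℂ))).re * r.re
        + (Complex.I * (d t k : ℂ) * Complex.exp (Complex.I * (ϑ t k : ℂ))).im * r.im
        = d t k * d t k := by
      intro k
      have hk := key t k
      have hexp : Complex.exp (-Complex.I * (ϑ t k : ℂ)) =
          starRingEnd ℂ (Complex.exp (Complex.I * (ϑ t k : ℂ))) := by
        rw [← Complex.exp_conj]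
        congr 1
        simp [Complex.conj_ofReal]
      rw [hexp] at hk
      set e := Complex.exp (Complex.I * (ϑ t k : ℂ))
      -- hk : (conj e * r).im = d t k
      have h3 : (starRingEnd ℂ e * r).im = e.re * r.im - e.im * r.re := by
        simp only [Complex.mul_im, Complex.conj_re, Complex.conj_im]
        ring
      rw [h3] at hk
      have h4 : (Complex.I * (d t k : ℂ) * e).re = - (d t k) * e.im := by
        simp only [Complex.mul_re, Complex.mul_im, Complex.I_re, Complex.I_im,
          Complex.ofReal_re, Complex.ofReal_im]
        ring
      have h5 : (Complex.I * (d t k : ℂ) * e).im = (d t k) * e.re := by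
        simp only [Complex.mul_re, Complex.mul_im, Complex.I_re, Complex.I_im,
          Complex.ofReal_re, Complex.ofReal_im]
        ring
      rw [h4, h5, ← hk]
      ring
    -- now expand r'
    have hone : (1 / (n : ℂ)) = ((1 / (n : ℝ) : ℝ) : ℂ) := by push_cast; ring
    have hre' : r'.re = (1 / (n : ℝ)) * ∑ k, (Complex.I * (d t k : ℂ) * Complex.exp (Complex.I * (ϑ t k : ℂ))).re := by
      rw [hr'def, hone]
      simp only [Complex.mul_re, Complex.ofReal_re, Complex.ofReal_im, Complex.re_sum]
      ring
    have him' : r'.im = (1 / (n : ℝ)) * ∑ k, (Complex.I * (d t k : ℂ) * Complex.exp (Complex.I * (ϑ t k : ℂ))).im := by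
      rw [hr'def, hone]
      simp only [Complex.mul_im, Complex.ofReal_re, Complex.ofReal_im, Complex.im_sum]
      ring
    rw [hre', him']
    have hsum : ∑ k, (Complex.exp (-Complex.I * (ϑ t k : ℂ)) * r).im ^ 2 = ∑ k, d t k * d t k := by
      refine Finset.sum_congr rfl fun k _ => ?_
      rw [key t k]; ring
    rw [hsum]
    have expand : ∑ k, d t k * d t k =
        ∑ k, ((Complex.I * (d t k : ℂ) * Complex.exp (Complex.I * (ϑ t k : ℂ))).re * r.re
        + (Complex.I * (d t k : ℂ) * Complex.exp (Complex.I * (ϑ t k : ℂ))).im * r.im) := by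
      exact Finset.sum_congr rfl fun k _ => (him2 k).symm
    rw [expand, Finset.sum_add_distrib, ← Finset.sum_mul, ← Finset.sum_mul]
    field_simp
  refine ⟨main, ?_⟩
  have hmono2 : Monotone (fun s => ‖orderParam n ϑ s‖ ^ 2) := by
    refine monotone_of_hasDerivAt_nonneg (f' := fun t => (2 / (n : ℝ)) *
        ∑ k, (Complex.exp (-Complex.I * (ϑ t k : ℂ)) * orderParam n ϑ t).im ^ 2) main ?_
    intro t
    positivity
  intro s t hst
  have := hmono2 hst
  show ‖orderParam n ϑ s‖ ≤ ‖orderParam n ϑ t‖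
  have h1 : ‖orderParam n ϑ s‖ = Real.sqrt (‖orderParam n ϑ s‖ ^ 2) :=
    (Real.sqrt_sq (norm_nonneg _)).symm
  have h2 : ‖orderParam n ϑ t‖ = Real.sqrt (‖orderParam n ϑ t‖ ^ 2) :=
    (Real.sqrt_sq (norm_nonneg _)).symm
  rw [h1, h2]
  exact Real.sqrt_le_sqrt this
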